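/- Subadditivity of principal argument: for any complex numbers ξ₁, ξ₂ with ξ₁ + ξ₂ ≠ 0, one has |Arg(ξ₁ + ξ₂)| ≤ |Arg(ξ₁)| + |Arg(ξ₂)| (with the convention Arg(0) = π). -/

import Mathlib

/-- Principal argument with the convention `Arg 0 = π`. -/
noncomputable def arg' (z : ℂ) : ℝ := if z = 0 then Real.pi else Complex.arg z

open Real in
/-- `tan |x| = |tan x|` on `(-π/2, π/2)`. -/
lemma tan_abs_aux {x : ℝ} (hx : |x| < π / 2) : Real.tan |x| = |Real.tan x| := by
  rcases le_or_gt 0 x with h | h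
  · rw [abs_of_nonneg h, abs_of_nonneg (tan_nonneg_of_nonneg_of_le_pi_div_two h
      (le_of_lt (lt_of_abs_lt hx)))]
  · have hx' : -(π / 2) ≤ x := le_of_lt (neg_lt_of_abs_lt hx)
    rw [abs_of_neg h, abs_of_nonpos (tan_nonpos_of_nonpos_of_neg_pi_div_two_le h.le hx'),
      Real.tan_neg]

open Real in
/-- On `(-π/2, π/2)`, `|tan x| ≤ |tan y|` implies `|x| ≤ |y|`. -/
lemma abs_le_abs_of_tan_aux {x y : ℝ} (hx : |x| < π / 2) (hy : |y| < π / 2)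
    (h : |Real.tan x| ≤ |Real.tan y|) : |x| ≤ |y| := by
  by_contra hlt
  push_neg at hlt
  have := tan_lt_tan_of_nonneg_of_lt_pi_div_two (abs_nonneg y) hx hlt
  rw [tan_abs_aux hx, tan_abs_aux hy] at this
  linarith

/-- subadditivity of the principal argument:
`|Arg(ξ₁+ξ₂)| ≤ |Arg ξ₁| + |Arg ξ₂|` whenever `ξ₁ + ξ₂ ≠ 0`. -/
theorem stmt4 (ξ₁ ξ₂ : ℂ) (h : ξ₁ + ξ₂ ≠ 0) :
    |arg' (ξ₁ + ξ₂)| ≤ |arg' ξ₁| + |arg' ξ₂| := by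
  have hpi := Real.pi_pos
  rcases eq_or_ne ξ₁ 0 with h1 | h1
  · simp only [arg', if_pos h1, if_neg h, abs_of_pos Real.pi_pos]
    have h2 := abs_nonneg (if ξ₂ = 0 then Real.pi else Complex.arg ξ₂)
    have h3 := Complex.abs_arg_le_pi (ξ₁ + ξ₂)
    linarith
  rcases eq_or_ne ξ₂ 0 with h2 | h2
  · simp only [arg', if_pos h2, if_neg h, abs_of_pos Real.pi_pos]
    have h2' := abs_nonneg (Complex.arg ξ₁)
    have h3 := Complex.abs_arg_le_pi (ξ₁ + ξ₂)
    simp only [arg', if_neg h1]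
    linarith
  simp only [arg', if_neg h, if_neg h1, if_neg h2]
  set a := Complex.arg ξ₁ with ha
  set b := Complex.arg ξ₂ with hb
  rcases le_or_gt Real.pi (|a| + |b|) with hS | hS
  · exact (Complex.abs_arg_le_pi _).trans hS
  -- main case
  set μ : ℝ := (a + b) / 2 with hμ
  set δ : ℝ := (a - b) / 2 with hδdef
  have habμ : |μ| ≤ (|a| + |b|) / 2 := by
    rw [hμ, abs_div, abs_two]
    have := abs_add_le a b
    linarith
  have habδ : |δ| ≤ (|a| + |b|) / 2 := by
    rw [hδdef, abs_div, abs_two]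
    have := abs_sub a b
    linarith
  have hδlt : |δ| < Real.pi / 2 := by linarith
  have hμδ : |μ| + |δ| < Real.pi := by linarith
  set r₁ : ℝ := ‖ξ₁‖ with hr₁def
  set r₂ : ℝ := ‖ξ₂‖ with hr₂def
  have hr₁ : 0 < r₁ := norm_pos_iff.mpr h1
  have hr₂ : 0 < r₂ := norm_pos_iff.mpr h2
  have hcosδ : 0 < Real.cos δ := by
    apply Real.cos_pos_of_mem_Ioo
    constructor
    · linarith [neg_lt_of_abs_lt hδlt]
    · exact lt_of_abs_lt hδlt
  set v : ℂ := (r₁ : ℂ) * Complex.exp ((δ : ℂ) * Complex.I) +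
      (r₂ : ℂ) * Complex.exp (((-δ : ℝ) : ℂ) * Complex.I) with hvdef
  have hvre : v.re = (r₁ + r₂) * Real.cos δ := by
    rw [hvdef]
    simp only [Complex.add_re, Complex.mul_re, Complex.ofReal_re, Complex.ofReal_im,
      Complex.exp_ofReal_mul_I_re, Complex.exp_ofReal_mul_I_im, zero_mul, sub_zero,
      Real.cos_neg]
    ring
  have hvim : v.im = (r₁ - r₂) * Real.sin δ := by
    rw [hvdef]
    simp only [Complex.add_im, Complex.mul_im, Complex.ofReal_re, Complex.ofReal_im,
      Complex.exp_ofReal_mul_I_re, Complex.exp_ofReal_mul_I_im, zero_mul, add_zero,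
      Real.sin_neg]
    ring
  have hvrepos : 0 < v.re := by rw [hvre]; positivity
  have hv0 : v ≠ 0 := by
    intro hv
    rw [hv] at hvrepos
    simp at hvrepos
  have hve : Complex.exp ((μ : ℂ) * Complex.I) * v = ξ₁ + ξ₂ := by
    rw [hvdef, mul_add, ← mul_assoc, ← mul_assoc,
      mul_comm (Complex.exp ((μ : ℂ) * Complex.I)) ((r₁ : ℂ)),
      mul_comm (Complex.exp ((μ : ℂ) * Complex.I)) ((r₂ : ℂ)),
      mul_assoc, mul_assoc, ← Complex.exp_add, ← Complex.exp_add]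
    have e1 : (μ : ℂ) * Complex.I + (δ : ℂ) * Complex.I = (a : ℂ) * Complex.I := by
      rw [hμ, hδdef]; push_cast; ring
    have e2 : (μ : ℂ) * Complex.I + ((-δ : ℝ) : ℂ) * Complex.I = (b : ℂ) * Complex.I := by
      rw [hμ, hδdef]; push_cast; ring
    rw [e1, e2, ha, hb, hr₁def, hr₂def, Complex.norm_mul_exp_arg_mul_I,
      Complex.norm_mul_exp_arg_mul_I]
  -- |arg v| ≤ |δ|
  have hargv : |Complex.arg v| ≤ |δ| := by
    have hlt : |Complex.arg v| < Real.pi / 2 :=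
      Complex.abs_arg_lt_pi_div_two_iff.mpr (Or.inl hvrepos)
    apply abs_le_abs_of_tan_aux hlt hδlt
    rw [Complex.tan_arg, hvre, hvim, Real.tan_eq_sin_div_cos, abs_div, abs_div,
      abs_mul, abs_mul]
    rw [div_le_div_iff₀ (by positivity) (abs_pos.mpr hcosδ.ne')]
    have h12 : |r₁ - r₂| ≤ r₁ + r₂ := by
      rw [abs_sub_le_iff]; constructor <;> linarith
    have : |r₁ + r₂| = r₁ + r₂ := abs_of_pos (by linarith)
    rw [this]
    have hsn := abs_nonneg (Real.sin δ)
    have hcn := abs_nonneg (Real.cos δ)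
    calc |r₁ - r₂| * |Real.sin δ| * |Real.cos δ|
        ≤ (r₁ + r₂) * |Real.sin δ| * |Real.cos δ| := by gcongr
      _ = |Real.sin δ| * ((r₁ + r₂) * |Real.cos δ|) := by ring
  -- arg of the product
  have hargexp : Complex.arg (Complex.exp ((μ : ℂ) * Complex.I)) = μ := by
    rw [Complex.exp_mul_I]
    push_cast
    exact Complex.arg_cos_add_sin_mul_I
      ⟨by linarith [neg_abs_le μ, abs_nonneg δ], by linarith [le_abs_self μ, abs_nonneg δ]⟩
  have hargsum : Complex.arg (ξ₁ + ξ₂) = μ + Complex.arg v := by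
    rw [← hve, Complex.arg_mul (Complex.exp_ne_zero _) hv0, hargexp]
    rw [hargexp]
    constructor
    · have := neg_abs_le (μ + Complex.arg v)
      have := abs_add_le μ (Complex.arg v)
      linarith
    · have := le_abs_self (μ + Complex.arg v)
      have := abs_add_le μ (Complex.arg v)
      linarith
  rw [hargsum]
  calc |μ + Complex.arg v| ≤ |μ| + |Complex.arg v| := abs_add_le _ _
    _ ≤ |μ| + |δ| := by linarith
    _ ≤ |a| + |b| := by linarith
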